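/- In the setting of Proposition 1, if additionally P(x_m|Y=1) = P(x_m|Y=0) for all m outside a subset I of size M̃ (the informative instances), then logit(P(Y=1|X)) = Σ_{m∈I} logit(P(Y=1|x_m)) - (M̃-1)·log(P(Y=1)/P(Y=0)). -/

import Mathlib

noncomputable def logit (p : ℝ) : ℝ := Real.log (p / (1 - p))

lemma logit_form (x y p : ℝ) (hx : 0 < x) (hy : 0 < y) (hp0 : 0 < p) (hp1 : p < 1) :
    logit (x * p / (x * p + y * (1 - p))) =
      (Real.log x - Real.log y) + (Real.log p - Real.log (1 - p)) := by
  have h1p : 0 < 1 - p := by linarith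
  have hxp : 0 < x * p := mul_pos hx hp0
  have hyp : 0 < y * (1 - p) := mul_pos hy h1p
  have hden : 0 < x * p + y * (1 - p) := by linarith
  unfold logit
  have h1 : 1 - x * p / (x * p + y * (1 - p)) = y * (1 - p) / (x * p + y * (1 - p)) := by
    field_simp
    ring
  have h2 : x * p / (x * p + y * (1 - p)) / (y * (1 - p) / (x * p + y * (1 - p)))
      = x * p / (y * (1 - p)) := by
    rw [div_div_div_cancel_right₀]
    exact hden.ne'
  rw [h1, h2, Real.log_div hxp.ne' hyp.ne',
    Real.log_mul hx.ne' hp0.ne', Real.log_mul hy.ne' h1p.ne']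
  ring

/-- Proposition 1 with uninformative instances: if `a m = b m` for all `m ∉ I`, then
only the `M̃ = |I|` informative instances contribute. -/
theorem bag_logit_eq_sum_informative_logits {M : ℕ} (a b : Fin M → ℝ) (p : ℝ)
    (q : Fin M → ℝ) (Q : ℝ) (I : Finset (Fin M))
    (ha : ∀ m, 0 < a m) (hb : ∀ m, 0 < b m) (hp0 : 0 < p) (hp1 : p < 1)
    (hq : ∀ m, q m = a m * p / (a m * p + b m * (1 - p)))
    (hQ : Q = (∏ m, a m) * p / ((∏ m, a m) * p + (∏ m, b m) * (1 - p)))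
    (huninf : ∀ m ∉ I, a m = b m) :
    logit Q = (∑ m ∈ I, logit (q m)) - ((I.card : ℝ) - 1) * Real.log (p / (1 - p)) := by
  have h1p : 0 < 1 - p := by linarith
  have hPa : 0 < ∏ m, a m := Finset.prod_pos (fun m _ => ha m)
  have hPb : 0 < ∏ m, b m := Finset.prod_pos (fun m _ => hb m)
  have hLQ : logit Q = (∑ m, (Real.log (a m) - Real.log (b m)))
      + (Real.log p - Real.log (1 - p)) := by
    rw [hQ, logit_form _ _ _ hPa hPb hp0 hp1,
      Real.log_prod (fun m _ => (ha m).ne'),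
      Real.log_prod (fun m _ => (hb m).ne'), Finset.sum_sub_distrib]
  have hLq : ∀ m, logit (q m) = (Real.log (a m) - Real.log (b m))
      + (Real.log p - Real.log (1 - p)) := fun m => by
    rw [hq m, logit_form _ _ _ (ha m) (hb m) hp0 hp1]
  have hsum : ∑ m, (Real.log (a m) - Real.log (b m))
      = ∑ m ∈ I, (Real.log (a m) - Real.log (b m)) := by
    symm
    apply Finset.sum_subset (Finset.subset_univ I)
    intro m _ hm
    rw [huninf m hm]; ring
  have hlog : Real.log (p / (1 - p)) = Real.log p - Real.log (1 - p) :=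
    Real.log_div hp0.ne' h1p.ne'
  rw [hLQ, hsum, hlog]
  simp only [hLq, Finset.sum_add_distrib, Finset.sum_const, nsmul_eq_mul]
  ring
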